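/- arXiv:1711.08287 — 2 statements merged into one kernel-verified Lean document; each statement's English description precedes it below -/
import Mathlib

section
/- For a point x ∈ ℍ^{n+1} and a round ball B ⊂ Sⁿ = ∂ℍ^{n+1}, if the hyperbolic distance from x to the convex hull Dome(B) is at least 1, then the visual diameter of B as seen from x satisfies diam_x(B) < π/2. -/
open scoped RealInnerProductSpace ENNReal NNReal Manifold
open MeasureTheory Metric Set Filter

noncomputable section

/-- Inverse hyperbolic cosine. -/
def arcosh (t : ℝ) : ℝ := Real.log (t + Real.sqrt (t ^ 2 - 1))

/-- Euclidean space `ℝ^{n+1}`, the ambient space of the Klein model of `ℍ^{n+1}`,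
whose underlying set is the open unit ball. -/
abbrev Ep (n : ℕ) := EuclideanSpace ℝ (Fin (n + 1))

/-- The sphere `Sⁿ`, the boundary at infinity of `ℍ^{n+1}`. -/
abbrev Sph (n : ℕ) := Metric.sphere (0 : Ep n) 1

instance (n : ℕ) : Fact (Module.finrank ℝ (Ep n) = n + 1) :=
  ⟨finrank_euclideanSpace_fin⟩

/-- Hyperbolic distance in the Klein model (for points in the open unit ball). -/
def hypDist (n : ℕ) (x y : Ep n) : ℝ :=
  arcosh ((1 - ⟪x, y⟫) / Real.sqrt ((1 - ‖x‖ ^ 2) * (1 - ‖y‖ ^ 2)))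

/-- Busemann function `B_o(x,θ)` normalized at the basepoint `o = 0` (Klein model). -/
def buse (n : ℕ) (x θ : Ep n) : ℝ :=
  Real.log ((1 - ⟪x, θ⟫) / Real.sqrt (1 - ‖x‖ ^ 2))

/-- Hyperbolic convex hull (the "dome") of a subset of the closed unit ball; in the
Klein model, geodesics are straight segments, so hyperbolic convex hulls are
Euclidean convex hulls intersected with the open ball. -/
def dome (n : ℕ) (X : Set (Ep n)) : Set (Ep n) := convexHull ℝ X ∩ ball 0 1

/-- A subset of `Sⁿ` viewed as a subset of the ambient `ℝ^{n+1}`. -/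
def sphSet (n : ℕ) (X : Set (Sph n)) : Set (Ep n) := Subtype.val '' X

/-- Spherical (angular) distance on `Sⁿ`, i.e. the visual metric at the basepoint. -/
def sphDist (n : ℕ) (θ η : Sph n) : ℝ := Real.arccos ⟪(θ : Ep n), (η : Ep n)⟫

/-- Round ball in `Sⁿ` with center `θ` and (angular) radius `r`. -/
def roundBall (n : ℕ) (θ : Sph n) (r : ℝ) : Set (Sph n) := {η | sphDist n θ η < r}

/-- Round annulus in `Sⁿ` with center `θ` and radii `r < R`. -/
def roundAnnulus (n : ℕ) (θ : Sph n) (r R : ℝ) : Set (Sph n) :=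
  {η | r < sphDist n θ η ∧ sphDist n θ η < R}

/-- The Klein-model Riemannian metric as a bilinear pairing of tangent vectors
`u v` at the point `x` (up to the conformal factor `(1-‖x‖²)⁻²`). -/
def kbil (n : ℕ) (x u v : Ep n) : ℝ :=
  ⟪u, v⟫ * (1 - ‖x‖ ^ 2) + ⟪x, u⟫ * ⟪x, v⟫

/-- Squared hyperbolic norm of a tangent vector `u` at `x` in the Klein model. -/
def qf (n : ℕ) (x u : Ep n) : ℝ := kbil n x u u / (1 - ‖x‖ ^ 2) ^ 2

/-- The visual metric `d_x` on `Sⁿ`: the hyperbolic angle at `x` between the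
geodesic rays (straight segments in the Klein model) from `x` to `θ` and `η`. -/
def visualDist (n : ℕ) (x : Ep n) (θ η : Sph n) : ℝ :=
  Real.arccos (kbil n x ((θ : Ep n) - x) ((η : Ep n) - x) /
    (Real.sqrt (kbil n x ((θ : Ep n) - x) ((θ : Ep n) - x)) *
      Real.sqrt (kbil n x ((η : Ep n) - x) ((η : Ep n) - x))))

/-- Diameter of a subset of `Sⁿ` with respect to the visual metric `d_x`. -/
def visualDiam (n : ℕ) (x : Ep n) (X : Set (Sph n)) : ℝ :=
  sSup {r | ∃ θ ∈ X, ∃ η ∈ X, r = visualDist n x θ η}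

/-- The (unnormalized) spherical surface measure on `Sⁿ`. -/
def sphereVol (n : ℕ) : Measure (Sph n) := (volume : Measure (Ep n)).toSphere

/-- The normalized (probability) spherical measure on `Sⁿ`. -/
def probSphere (n : ℕ) : Measure (Sph n) := (sphereVol n Set.univ)⁻¹ • sphereVol n

/-- The visual probability measure `vol_x` of `x ∈ ℍ^{n+1}`, given by its density
`e^{-n B_o(x,θ)}` with respect to the normalized spherical measure; it is the unique
probability measure on `Sⁿ` invariant under the isometries fixing `x`. -/
def visualVol (n : ℕ) (x : Ep n) : Measure (Sph n) :=
  (probSphere n).withDensity fun θ => ENNReal.ofReal (Real.exp (-(n : ℝ) * buse n x θ))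

/-- `y` is the barycenter `BCG(μ)` of a measure `μ` on `Sⁿ = ∂ℍ^{n+1}`: the point of
hyperbolic space minimizing the total Busemann integral `z ↦ ∫ B_o(z,θ) dμ(θ)`
(for atomless `μ` this minimizer exists and is unique). -/
def IsBarycenter (n : ℕ) (μ : Measure (Sph n)) (y : Ep n) : Prop :=
  y ∈ ball (0 : Ep n) 1 ∧
    IsMinOn (fun z => ∫ θ, buse n z (θ : Ep n) ∂μ) (ball (0 : Ep n) 1) y

/-- The Besson–Courtois–Gallot barycentric extension `F_f` of `f : Sⁿ → Sⁿ`: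
`F_f(x)` is the barycenter of the pushforward under `f` of the visual measure at `x`. -/
def bcgExt (n : ℕ) (f : Sph n → Sph n) (x : Ep n) : Ep n :=
  Classical.epsilon (IsBarycenter n (Measure.map f (visualVol n x)))

/-- The surface measure `ω_{n-1}` of the unit sphere `S^{n-1} ⊂ ℝⁿ`. -/
def omegaS (n : ℕ) : ℝ := n * (volume (ball (0 : EuclideanSpace ℝ (Fin n)) 1)).toReal

/-- The derivative of `f : Sⁿ → Sⁿ` at `θ`, in the (conformal) stereographic charts. -/
def sphDeriv (n : ℕ) (f : Sph n → Sph n) (θ : Sph n) :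
    EuclideanSpace ℝ (Fin n) →L[ℝ] EuclideanSpace ℝ (Fin n) :=
  mfderiv (𝓡 n) (𝓡 n) f θ

/-- `f` is continuous, a.e. differentiable, and satisfies the outer distortion
inequality `‖Df‖ⁿ ≤ K det Df` almost everywhere: the quasiregularity condition. -/
def IsQROuter (n : ℕ) (K : ℝ) (f : Sph n → Sph n) : Prop :=
  Continuous f ∧ ∀ᵐ θ ∂sphereVol n, MDifferentiableAt (𝓡 n) (𝓡 n) f θ ∧
    ‖sphDeriv n f θ‖ ^ n ≤ K * LinearMap.det (sphDeriv n f θ).toLinearMap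

/-- The inner distortion inequality `det Df ≤ K · min_{|v|=1} |Df v|ⁿ` a.e. -/
def IsQRInner (n : ℕ) (K : ℝ) (f : Sph n → Sph n) : Prop :=
  ∀ᵐ θ ∂sphereVol n, LinearMap.det (sphDeriv n f θ).toLinearMap ≤
    K * sInf {r | ∃ v : EuclideanSpace ℝ (Fin n), ‖v‖ = 1 ∧ r = ‖sphDeriv n f θ v‖ ^ n}

/-- `f` is `K`-quasiregular: its distortion `K(f) = max(K_O(f), K_I(f))` is at most `K`. -/
def IsQR (n : ℕ) (K : ℝ) (f : Sph n → Sph n) : Prop :=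
  IsQROuter n K f ∧ IsQRInner n K f

/-- `f` has (topological) degree `d`, expressed through the change of variables
formula `∫ J_f = d · vol(Sⁿ)`, valid for quasiregular maps. -/
def HasDeg (n : ℕ) (f : Sph n → Sph n) (d : ℝ) : Prop :=
  ∫ θ, LinearMap.det (sphDeriv n f θ).toLinearMap ∂sphereVol n =
    d * (sphereVol n Set.univ).toReal

/-- `f` has degree at most `d`. -/
def DegLE (n : ℕ) (f : Sph n → Sph n) (d : ℕ) : Prop := ∃ k : ℕ, k ≤ d ∧ HasDeg n f k

/-- `f` is a non-constant map. -/
def Nonconstant (n : ℕ) (f : Sph n → Sph n) : Prop := ¬ ∃ c, f = fun _ => c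

/-- Admissible density for a curve family on `Sⁿ`: a measurable `ρ` whose line
integral along each (locally rectifiable) curve of `Γ` is at least `1`. -/
def SphAdmissible (n : ℕ) (ρ : Sph n → ℝ≥0∞) (Γ : Set (ℝ → Sph n)) : Prop :=
  Measurable ρ ∧ ∀ γ ∈ Γ,
    1 ≤ ∫⁻ t in Set.Icc (0 : ℝ) 1, ρ (γ t) * ENNReal.ofReal ‖deriv (fun s => (γ s : Ep n)) t‖

/-- Conformal modulus of a family of curves in `Sⁿ`. -/
def sphMod (n : ℕ) (Γ : Set (ℝ → Sph n)) : ℝ≥0∞ :=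
  ⨅ ρ ∈ {ρ | SphAdmissible n ρ Γ}, ∫⁻ θ, ρ θ ^ n ∂sphereVol n

/-- The family of curves joining the two boundary components of the round annulus
of center `θ` and radii `r < R` inside the annulus. -/
def annulusCurves (n : ℕ) (θ : Sph n) (r R : ℝ) : Set (ℝ → Sph n) :=
  {γ | ContinuousOn γ (Set.Icc 0 1) ∧
    (∀ t ∈ Set.Ioo (0 : ℝ) 1, r < sphDist n θ (γ t) ∧ sphDist n θ (γ t) < R) ∧
    sphDist n θ (γ 0) = r ∧ sphDist n θ (γ 1) = R}

/-- Conformal modulus of a round annulus in `Sⁿ`. -/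
def annulusMod (n : ℕ) (θ : Sph n) (r R : ℝ) : ℝ≥0∞ := sphMod n (annulusCurves n θ r R)

/-- The center of the boundary of the dome of the round ball of center `θ` and
radius `r`: the intersection of `∂Dome(B)` with the geodesic `[o,θ]`; in the Klein
model this is the point `cos r · θ`. -/
def domeCenter (n : ℕ) (θ : Sph n) (r : ℝ) : Ep n := Real.cos r • (θ : Ep n)

/-- The point `exp_x(R v_θ)` at hyperbolic distance `R` from `x` along the geodesic
ray from `x` towards the boundary point `θ` (a straight segment in the Klein model);
unit tangent vectors at `x` are identified with their boundary endpoints. -/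
def geoPoint (n : ℕ) (x : Ep n) (θ : Sph n) (R : ℝ) : Ep n :=
  Classical.epsilon fun y =>
    (∃ s ∈ Set.Ico (0 : ℝ) 1, y = x + s • ((θ : Ep n) - x)) ∧ hypDist n x y = R

/-- Operator norm, with respect to the hyperbolic metric at `x` (source) and `y`
(target), of a linear map between the corresponding tangent spaces. -/
def hypOpNorm (n : ℕ) (x y : Ep n) (T : Ep n →L[ℝ] Ep n) : ℝ :=
  sSup {r | ∃ u, qf n x u = 1 ∧ r = Real.sqrt (qf n y (T u))}

/-- Hyperbolic operator norm of a second derivative (a bilinear map). -/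
def hypOpNorm2 (n : ℕ) (x y : Ep n) (T : Ep n →L[ℝ] Ep n →L[ℝ] Ep n) : ℝ :=
  sSup {r | ∃ u v, qf n x u = 1 ∧ qf n x v = 1 ∧ r = Real.sqrt (qf n y (T u v))}


lemma cosh_one_sq_gt : (2.36 : ℝ) < Real.cosh 1 ^ 2 := by
  have h1 := Real.exp_one_gt_d9
  have h2 := Real.exp_one_lt_d9
  have hc : Real.cosh 1 = (Real.exp 1 + (Real.exp 1)⁻¹) / 2 := by
    rw [Real.cosh_eq, Real.exp_neg]
  have hpos : (0:ℝ) < Real.exp 1 := Real.exp_pos 1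
  have hinv : (0.36 : ℝ) < (Real.exp 1)⁻¹ := by
    rw [lt_inv_comm₀ (by norm_num) hpos]; linarith
  nlinarith [Real.exp_pos 1]

lemma le_of_arcosh {t : ℝ} (ht : 0 < t) (h : 1 ≤ arcosh t) : Real.cosh 1 ≤ t := by
  by_contra h'
  push_neg at h'
  have hs : Real.sqrt (t ^ 2 - 1) ≤ Real.sinh 1 := by
    rcases le_or_gt t 1 with h1 | h1
    · rw [Real.sqrt_eq_zero_of_nonpos (by nlinarith)]
      positivity
    · calc Real.sqrt (t ^ 2 - 1) ≤ Real.sqrt (Real.sinh 1 ^ 2) := by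
            apply Real.sqrt_le_sqrt
            have := Real.cosh_sq 1
            nlinarith
        _ = Real.sinh 1 := Real.sqrt_sq (by positivity)
  have hlt : t + Real.sqrt (t ^ 2 - 1) < Real.exp 1 := by
    rw [← Real.cosh_add_sinh]; linarith
  have : arcosh t < 1 := by
    have hp : 0 < t + Real.sqrt (t ^ 2 - 1) := by positivity
    calc arcosh t = Real.log (t + Real.sqrt (t ^ 2 - 1)) := rfl
      _ < Real.log (Real.exp 1) := Real.log_lt_log hp hlt
      _ = 1 := Real.log_exp 1
  linarith

lemma arccos_anti {u v : ℝ} (h : u ≤ v) : Real.arccos v ≤ Real.arccos u := by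
  rw [Real.arccos_eq_pi_div_two_sub_arcsin, Real.arccos_eq_pi_div_two_sub_arcsin]
  exact sub_le_sub_left (Real.monotone_arcsin h) _

lemma kbil_expand (n : ℕ) (x u v : Ep n) :
    kbil n x (u - x) (v - x) =
      (1 - ⟪x, u⟫) * (1 - ⟪x, v⟫) - (1 - ‖x‖ ^ 2) * (1 - ⟪u, v⟫) := by
  simp only [kbil, inner_sub_left, inner_sub_right, real_inner_self_eq_norm_sq]
  rw [real_inner_comm u x, real_inner_comm v x]
  ring

set_option maxHeartbeats 1000000 in
lemma pair_bound (n : ℕ) (x : Ep n) (hx : ‖x‖ < 1) (B : Set (Sph n))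
    (hfar : ∀ z ∈ dome n (sphSet n B), 1 ≤ hypDist n x z)
    (a b : Sph n) (ha : a ∈ B) (hb : b ∈ B) :
    visualDist n x a b ≤ Real.arccos (1 - 2 / Real.cosh 1 ^ 2) := by
  set A : Ep n := (a : Ep n) with hAdef
  set C : Ep n := (b : Ep n) with hCdef
  have hA : ‖A‖ = 1 := mem_sphere_zero_iff_norm.1 a.2
  have hC : ‖C‖ = 1 := mem_sphere_zero_iff_norm.1 b.2
  set α : ℝ := 1 - ⟪x, A⟫ with hαdef
  set β : ℝ := 1 - ⟪x, C⟫ with hβdef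
  set c : ℝ := 1 - ⟪A, C⟫ with hcdef
  set s : ℝ := 1 - ‖x‖ ^ 2 with hsdef
  have hα : 0 < α := by
    have := real_inner_le_norm x A
    rw [hA, mul_one] at this
    simp only [hαdef]; linarith
  have hβ : 0 < β := by
    have := real_inner_le_norm x C
    rw [hC, mul_one] at this
    simp only [hβdef]; linarith
  have hc0 : 0 ≤ c := by
    have := real_inner_le_norm A C
    rw [hA, hC, mul_one] at this
    simp only [hcdef]; linarith
  have hs : 0 < s := by
    simp only [hsdef]; nlinarith [norm_nonneg x]
  have hAA : ⟪A, A⟫ = 1 := by rw [real_inner_self_eq_norm_sq, hA]; norm_num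
  have hCC : ⟪C, C⟫ = 1 := by rw [real_inner_self_eq_norm_sq, hC]; norm_num
  have k1 : kbil n x (A - x) (C - x) = α * β - s * c := by
    rw [kbil_expand]
  have k2 : kbil n x (A - x) (A - x) = α ^ 2 := by
    rw [kbil_expand, hAA]; ring
  have k3 : kbil n x (C - x) (C - x) = β ^ 2 := by
    rw [kbil_expand, hCC]; ring
  have hvd : visualDist n x a b = Real.arccos ((α * β - s * c) / (α * β)) := by
    rw [visualDist, ← hAdef, ← hCdef, k1, k2, k3,
      Real.sqrt_sq hα.le, Real.sqrt_sq hβ.le]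
  rw [hvd]
  rcases eq_or_lt_of_le hc0 with hc | hc
  · rw [← hc]
    have : (α * β - s * 0) / (α * β) = 1 := by
      field_simp
      ring
    rw [this, Real.arccos_one]
    exact Real.arccos_nonneg _
  -- main case : 0 < c
  apply arccos_anti
  set w1 : ℝ := β / (α + β) with hw1
  set w2 : ℝ := α / (α + β) with hw2
  set z : Ep n := w1 • A + w2 • C with hzdef
  have hzhull : z ∈ convexHull ℝ (sphSet n B) := by
    have hmA : A ∈ sphSet n B := ⟨a, ha, rfl⟩
    have hmC : C ∈ sphSet n B := ⟨b, hb, rfl⟩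
    apply (convex_convexHull ℝ _) (subset_convexHull ℝ _ hmA)
      (subset_convexHull ℝ _ hmC)
    · positivity
    · positivity
    · rw [hw1, hw2]; field_simp; ring
  have hxz : 1 - ⟪x, z⟫ = 2 * α * β / (α + β) := by
    rw [hzdef]
    simp only [inner_add_right, real_inner_smul_right]
    have h1 : ⟪x, A⟫ = 1 - α := by rw [hαdef]; ring
    have h2 : ⟪x, C⟫ = 1 - β := by rw [hβdef]; ring
    rw [h1, h2, hw1, hw2]
    field_simp
    ring
  have hzz : 1 - ‖z‖ ^ 2 = 2 * α * β * c / (α + β) ^ 2 := by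
    have : ‖z‖ ^ 2 = ⟪z, z⟫ := (real_inner_self_eq_norm_sq z).symm
    rw [this, hzdef]
    simp only [inner_add_left, inner_add_right, real_inner_smul_left,
      real_inner_smul_right]
    have h3 : ⟪A, C⟫ = 1 - c := by rw [hcdef]; ring
    have h3' : ⟪C, A⟫ = 1 - c := by rw [real_inner_comm]; exact h3
    simp only [hAA, hCC, h3, h3', hw1, hw2]
    field_simp
    ring
  have hzball : z ∈ ball (0 : Ep n) 1 := by
    rw [mem_ball_zero_iff]
    have h4 : ‖z‖ ^ 2 < 1 := by
      have : 0 < 2 * α * β * c / (α + β) ^ 2 := by positivity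
      linarith
    nlinarith [norm_nonneg z]
  have hfz : 1 ≤ hypDist n x z := hfar z ⟨hzhull, hzball⟩
  rw [hypDist, ← hsdef, hzz, hxz] at hfz
  set D : ℝ := s * (2 * α * β * c / (α + β) ^ 2) with hD
  have hDpos : 0 < D := by positivity
  set t : ℝ := 2 * α * β / (α + β) / Real.sqrt D with htdef
  have htpos : 0 < t := by positivity
  have hcosht : Real.cosh 1 ≤ t := le_of_arcosh htpos hfz
  have ht2 : t ^ 2 = 2 * α * β / (s * c) := by
    rw [htdef, div_pow, Real.sq_sqrt hDpos.le, hD]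
    field_simp
  have hcoshpos : (0:ℝ) < Real.cosh 1 ^ 2 := by positivity
  have hkey : Real.cosh 1 ^ 2 ≤ 2 * α * β / (s * c) := by
    rw [← ht2]
    nlinarith [Real.cosh_pos (x := (1:ℝ))]
  have hsc : s * c * Real.cosh 1 ^ 2 ≤ 2 * α * β := by
    rw [le_div_iff₀ (mul_pos hs hc)] at hkey
    nlinarith
  have h5 : s * c ≤ 2 / Real.cosh 1 ^ 2 * (α * β) := by
    rw [div_mul_eq_mul_div, le_div_iff₀ hcoshpos]
    nlinarith
  rw [le_div_iff₀ (mul_pos hα hβ)]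
  nlinarith [h5]

/-- If `x ∈ ℍ^{n+1}` is at hyperbolic distance at least `1` from
the dome of a round ball `B ⊂ Sⁿ`, then the visual diameter of `B` seen from `x`
is less than `π/2`. -/
theorem statement5 (n : ℕ) (x : Ep n) (hx : x ∈ ball (0 : Ep n) 1)
    (θ : Sph n) (r : ℝ) (hr : 0 < r)
    (hfar : ∀ z ∈ dome n (sphSet n (roundBall n θ r)), 1 ≤ hypDist n x z) :
    visualDiam n x (roundBall n θ r) < Real.pi / 2 := by
  have hK2 : 2 / Real.cosh 1 ^ 2 < 1 := by
    rw [div_lt_one (by positivity)]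
    linarith [cosh_one_sq_gt]
  have hK2' : 0 ≤ 2 / Real.cosh 1 ^ 2 := by positivity
  have hle : visualDiam n x (roundBall n θ r) ≤
      Real.arccos (1 - 2 / Real.cosh 1 ^ 2) := by
    apply Real.sSup_le
    · rintro v ⟨a, ha, b, hb, rfl⟩
      exact pair_bound n x (mem_ball_zero_iff.1 hx) _ hfar a b ha hb
    · exact Real.arccos_nonneg _
  have hlt : Real.arccos (1 - 2 / Real.cosh 1 ^ 2) < Real.arccos 0 :=
    Real.strictAntiOn_arccos ⟨by norm_num, by norm_num⟩
      ⟨by linarith, by linarith⟩ (by linarith)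
  rw [Real.arccos_zero] at hlt
  linarith


end
end

section
/- Let (f_m) be a sequence of η-quasisymmetric covering maps S¹ → S¹ of degree at most d. Then there is a subsequence converging uniformly to an η-quasisymmetric covering map f : S¹ → S¹ of degree at most d. -/
open scoped NNReal
open Filter

noncomputable section

/-- `h` is an `η`-quasisymmetric homeomorphism of the circle `S¹`, for a
homeomorphism `η` of `[0,∞)`. -/
def IsQSHomeo (η : ℝ≥0 ≃ₜ ℝ≥0) (h : Circle → Circle) : Prop :=
  IsHomeomorph h ∧ ∀ x y z : Circle, x ≠ y → y ≠ z → x ≠ z →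
    nndist (h x) (h y) / nndist (h x) (h z) ≤ η (nndist x y / nndist x z)

/-- `f : S¹ → S¹` is an `η`-quasisymmetric covering of degree `d`: the covering
`z ↦ z^d` post-composing an `η`-quasisymmetric homeomorphism. -/
def IsQSCovering (η : ℝ≥0 ≃ₜ ℝ≥0) (d : ℕ) (f : Circle → Circle) : Prop :=
  ∃ h : Circle → Circle, IsQSHomeo η h ∧ f = fun z => (h z) ^ d

namespace Statement9Aux

/-! ### Facts about homeomorphisms of `ℝ≥0` -/

lemma eta_mono (η : ℝ≥0 ≃ₜ ℝ≥0) : StrictMono η := by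
  rcases η.continuous.strictMono_of_inj η.injective with h | h
  · exact h
  · exfalso
    obtain ⟨y, hy⟩ := η.surjective (η 0 + 1)
    have h2 : η y ≤ η 0 := h.antitone (zero_le : (0:ℝ≥0) ≤ y)
    rw [hy] at h2
    simp at h2

lemma eta_zero (η : ℝ≥0 ≃ₜ ℝ≥0) : η 0 = 0 := by
  obtain ⟨y, hy⟩ := η.surjective 0
  have h2 := (eta_mono η).monotone (zero_le : (0:ℝ≥0) ≤ y)
  rw [hy] at h2
  exact le_antisymm h2 zero_le

lemma eta_ne_zero (η : ℝ≥0 ≃ₜ ℝ≥0) {t : ℝ≥0} (ht : t ≠ 0) : η t ≠ 0 := by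
  intro h
  exact ht (η.injective (h.trans (eta_zero η).symm))

/-! ### Elementary geometry of the circle -/

def cI : Circle := ⟨Complex.I, by simp [Submonoid.unitSphere]⟩
def cN : Circle := ⟨-1, by simp [Submonoid.unitSphere]⟩

lemma cI_ne_one : cI ≠ 1 := by
  intro h
  have h2 := congrArg (Subtype.val) h
  simp only [cI] at h2
  rw [show ((1 : Circle) : ℂ) = 1 from rfl] at h2
  simp [Complex.ext_iff] at h2

lemma cN_ne_one : cN ≠ 1 := by
  intro h
  have h2 := congrArg (Subtype.val) h
  rw [show ((1 : Circle) : ℂ) = 1 from rfl] at h2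
  simp only [cN] at h2
  norm_num at h2

lemma cI_ne_cN : cI ≠ cN := by
  intro h
  have h2 := congrArg (Subtype.val) h
  simp [cI, cN, Complex.ext_iff] at h2

lemma mul_ne_self {c : Circle} (hc : c ≠ 1) (x : Circle) : c * x ≠ x := by
  intro h
  exact hc (by simpa using mul_left_inj x |>.mp (h.trans (one_mul x).symm))

lemma circle_dist_eq (x y : Circle) : dist x y = ‖(x : ℂ) - y‖ := by
  exact Complex.dist_eq (x:ℂ) y

lemma circle_nndist_le_two (x y : Circle) : nndist x y ≤ 2 := by
  rw [← NNReal.coe_le_coe, coe_nndist, circle_dist_eq]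
  calc ‖(x:ℂ) - y‖ ≤ ‖(x:ℂ)‖ + ‖(y:ℂ)‖ := norm_sub_le _ _
  _ ≤ 2 := by rw [Circle.norm_coe, Circle.norm_coe]; norm_num

lemma nndist_mul_self (c x : Circle) : nndist x (c * x) = ‖1 - (c:ℂ)‖₊ := by
  rw [← NNReal.coe_inj, coe_nndist, circle_dist_eq, Circle.coe_mul, coe_nnnorm]
  rw [show (x:ℂ) - c * x = (1 - c) * x by ring, norm_mul, Circle.norm_coe, mul_one]

lemma one_le_nndist_cI (x : Circle) : 1 ≤ nndist x (cI * x) := by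
  rw [nndist_mul_self, ← NNReal.coe_le_coe, coe_nnnorm]
  have h1 : |((1 : ℂ) - cI).im| ≤ ‖1 - (cI:ℂ)‖ := Complex.abs_im_le_norm _
  simpa [cI] using h1

lemma one_le_nndist_cN (x : Circle) : 1 ≤ nndist x (cN * x) := by
  rw [nndist_mul_self, ← NNReal.coe_le_coe, coe_nnnorm]
  have h2 : (1 : ℂ) - cN = 2 := by simp [cN]; ring
  rw [h2]
  simp

/-- There is a point `z` distinct from `x` and `y` with `1 ≤ nndist x z`. -/
lemma exists_far_point (x y : Circle) : ∃ z : Circle, z ≠ x ∧ z ≠ y ∧ 1 ≤ nndist x z := by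
  by_cases hy : y = cI * x
  · refine ⟨cN * x, mul_ne_self cN_ne_one x, ?_, one_le_nndist_cN x⟩
    rw [hy]
    exact fun h => cI_ne_cN ((mul_left_inj x).mp h).symm
  · exact ⟨cI * x, mul_ne_self cI_ne_one x, fun h => hy h.symm, one_le_nndist_cI x⟩

/-! ### Uniform modulus of continuity and lower bound for QS homeomorphisms -/

/-- Upper modulus of continuity for `η`-QS homeomorphisms. -/
lemma qs_upper {η : ℝ≥0 ≃ₜ ℝ≥0} {h : Circle → Circle} (hh : IsQSHomeo η h) (x y : Circle) :
    nndist (h x) (h y) ≤ 2 * η (nndist x y) := by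
  rcases eq_or_ne x y with rfl | hxy
  · simp
  obtain ⟨z, hzx, hzy, hz1⟩ := exists_far_point x y
  have hkey := hh.2 x y z hxy (fun e => hzy e.symm) (fun e => hzx e.symm)
  have hdz : nndist (h x) (h z) ≠ 0 :=
    fun e => hzx (hh.1.injective (nndist_eq_zero.mp e)).symm
  rw [div_le_iff₀ (pos_iff_ne_zero.mpr hdz)] at hkey
  calc nndist (h x) (h y) ≤ η (nndist x y / nndist x z) * nndist (h x) (h z) := hkey
    _ ≤ η (nndist x y) * 2 := by
        refine mul_le_mul ?_ (circle_nndist_le_two _ _) zero_le zero_le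
        exact (eta_mono η).monotone (div_le_self zero_le hz1)
    _ = 2 * η (nndist x y) := mul_comm _ _

/-- Uniform lower distance bound for `η`-QS homeomorphisms. -/
lemma qs_lower {η : ℝ≥0 ≃ₜ ℝ≥0} {h : Circle → Circle} (hh : IsQSHomeo η h)
    {x z : Circle} (hxz : x ≠ z) :
    (η (2 / nndist x z))⁻¹ ≤ nndist (h x) (h z) := by
  have hdxz : nndist x z ≠ 0 := fun e => hxz (nndist_eq_zero.mp e)
  obtain ⟨y, hy_ne_x, hy_ne_z, hy_far⟩ :
      ∃ y : Circle, y ≠ x ∧ y ≠ z ∧ 1 ≤ nndist (h x) (h y) := by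
    obtain ⟨z', hz'x, hz'z, hz'1⟩ := exists_far_point (h x) (h z)
    obtain ⟨y, rfl⟩ := hh.1.surjective z'
    exact ⟨y, fun e => hz'x (congrArg h e), fun e => hz'z (congrArg h e), hz'1⟩
  have hkey := hh.2 x y z (fun e => hy_ne_x e.symm) hy_ne_z hxz
  have hdz : nndist (h x) (h z) ≠ 0 :=
    fun e => hxz (hh.1.injective (nndist_eq_zero.mp e))
  rw [div_le_iff₀ (pos_iff_ne_zero.mpr hdz)] at hkey
  have h1 : (1 : ℝ≥0) ≤ η (2 / nndist x z) * nndist (h x) (h z) := by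
    refine le_trans hy_far (hkey.trans ?_)
    refine mul_le_mul ?_ le_rfl zero_le zero_le
    exact (eta_mono η).monotone (by gcongr; exact circle_nndist_le_two x y)
  have hE : η (2 / nndist x z) ≠ 0 := by
    refine eta_ne_zero η ?_
    simp [div_eq_zero_iff, hdxz]
  rw [NNReal.inv_le hE]
  exact h1

/-! ### Compactness of the set of maps with a fixed modulus of continuity -/

noncomputable def modB (η : ℝ≥0 ≃ₜ ℝ≥0) : ℝ → ℝ := fun t => ((2 * η t.toNNReal : ℝ≥0) : ℝ)

lemma modB_lim (η : ℝ≥0 ≃ₜ ℝ≥0) : Filter.Tendsto (modB η) (nhds 0) (nhds 0) := by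
  have hbc : Continuous (modB η) :=
    NNReal.continuous_coe.comp ((continuous_const.mul η.continuous).comp continuous_real_toNNReal)
  have h0 : modB η 0 = 0 := by
    show ((2 * η (Real.toNNReal 0) : ℝ≥0) : ℝ) = 0
    rw [Real.toNNReal_zero, eta_zero η, mul_zero, NNReal.coe_zero]
  simpa [h0] using hbc.tendsto 0

lemma modB_dist (η : ℝ≥0 ≃ₜ ℝ≥0) (x y : Circle) :
    modB η (dist x y) = ((2 * η (nndist x y) : ℝ≥0) : ℝ) := by
  show ((2 * η (Real.toNNReal (dist x y)) : ℝ≥0) : ℝ) = _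
  rw [dist_nndist, Real.toNNReal_coe]

lemma modB_of_le (η : ℝ≥0 ≃ₜ ℝ≥0) {u : Circle → Circle}
    (hu : ∀ x y, nndist (u x) (u y) ≤ 2 * η (nndist x y)) (x y : Circle) :
    dist (u x) (u y) ≤ modB η (dist x y) := by
  rw [modB_dist η x y, dist_nndist, NNReal.coe_le_coe]
  exact hu x y

lemma continuous_of_modulus (η : ℝ≥0 ≃ₜ ℝ≥0) {u : Circle → Circle}
    (hu : ∀ x y, nndist (u x) (u y) ≤ 2 * η (nndist x y)) : Continuous u :=
  (Metric.equicontinuous_of_continuity_modulus (modB η) (modB_lim η) (fun _ : Unit => u)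
    (fun x y _ => modB_of_le η hu x y)).continuous ()

lemma isClosed_T (η : ℝ≥0 ≃ₜ ℝ≥0) :
    IsClosed {u : Circle → Circle | ∀ x y, nndist (u x) (u y) ≤ 2 * η (nndist x y)} := by
  have hTeq : {u : Circle → Circle | ∀ x y, nndist (u x) (u y) ≤ 2 * η (nndist x y)}
      = ⋂ (x : Circle) (y : Circle),
        {u : Circle → Circle | nndist (u x) (u y) ≤ 2 * η (nndist x y)} := by
    ext u
    simp only [Set.mem_iInter, Set.mem_setOf_eq]
  rw [hTeq]
  refine isClosed_iInter fun x => isClosed_iInter fun y => ?_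
  refine isClosed_le ?_ continuous_const
  have c1 : Continuous (fun u : Circle → Circle => u x) := continuous_apply x
  have c2 : Continuous (fun u : Circle → Circle => u y) := continuous_apply y
  exact uniformContinuous_nndist.continuous.comp (c1.prodMk c2)

/-- Arzelà–Ascoli: the set of continuous self-maps of the circle with modulus of
continuity `2 * η` is compact in the uniform topology. -/
lemma isCompact_modulus_set (η : ℝ≥0 ≃ₜ ℝ≥0) :
    IsCompact {u : C(Circle, Circle) | ∀ x y, nndist (u x) (u y) ≤ 2 * η (nndist x y)} := by
  have himg : ContinuousMap.toFun ''
      {u : C(Circle, Circle) | ∀ x y, nndist (u x) (u y) ≤ 2 * η (nndist x y)}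
      = {u : Circle → Circle | ∀ x y, nndist (u x) (u y) ≤ 2 * η (nndist x y)} := by
    apply subset_antisymm
    · rintro _ ⟨u, hu, rfl⟩
      exact hu
    · intro u hu
      exact ⟨⟨u, continuous_of_modulus η hu⟩, hu, rfl⟩
  refine ArzelaAscoli.isCompact_of_equicontinuous _ (himg ▸ (isClosed_T η).isCompact) ?_
  exact Metric.equicontinuous_of_continuity_modulus (modB η) (modB_lim η) _
    (fun x y i => modB_of_le η i.2 x y)

end Statement9Aux

open Statement9Aux

/-- A sequence of `η`-quasisymmetric covering maps `S¹ → S¹` of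
degree at most `d` has a subsequence converging uniformly to an
`η`-quasisymmetric covering map of degree at most `d`. -/
theorem statement9 (η : ℝ≥0 ≃ₜ ℝ≥0) (d : ℕ) (f : ℕ → Circle → Circle)
    (hf : ∀ m, ∃ k ≤ d, IsQSCovering η k (f m)) :
    ∃ (φ : ℕ → ℕ) (g : Circle → Circle), StrictMono φ ∧
      (∃ k ≤ d, IsQSCovering η k g) ∧
      TendstoUniformly (fun j => f (φ j)) g atTop := by
  choose k hkd hcov using hf
  choose h hQS hfe using hcov
  -- Pigeonhole: some degree `K ≤ d` occurs infinitely often.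
  have hfib : ∃ K ∈ Finset.range (d + 1), {m | k m = K}.Infinite := by
    by_contra hcon
    push_neg at hcon
    have hsub : (Set.univ : Set ℕ) ⊆ ⋃ K ∈ Finset.range (d + 1), {m | k m = K} := by
      intro m _
      simp only [Set.mem_iUnion, Set.mem_setOf_eq]
      exact ⟨k m, Finset.mem_range.mpr (Nat.lt_succ_of_le (hkd m)), rfl⟩
    exact Set.infinite_univ (Set.Finite.subset (Set.Finite.biUnion
      (Finset.range (d + 1)).finite_toSet
      (fun K hK => hcon K hK)) hsub)
  obtain ⟨K, hKmem, hKinf⟩ := hfib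
  have hKd : K ≤ d := Nat.lt_succ_iff.mp (Finset.mem_range.mp hKmem)
  obtain ⟨φ₁, hφ₁, hkφ₁⟩ := Filter.extraction_of_frequently_atTop
    (Nat.frequently_atTop_iff_infinite.mpr hKinf)
  -- Extract a uniformly convergent subsequence of the homeomorphisms.
  have hcontm : ∀ m, Continuous (h m) := fun m => (hQS m).1.continuous
  let H : ℕ → C(Circle, Circle) := fun j => ⟨h (φ₁ j), hcontm _⟩
  have hHS : ∀ j, H j ∈
      {u : C(Circle, Circle) | ∀ x y, nndist (u x) (u y) ≤ 2 * η (nndist x y)} :=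
    fun j x y => qs_upper (hQS (φ₁ j)) x y
  obtain ⟨hlim, hlimMem, ψ, hψ, hconv⟩ := (isCompact_modulus_set η).tendsto_subseq hHS
  have huc : TendstoUniformly (fun j => ((H (ψ j) : C(Circle, Circle)) : Circle → Circle))
      (hlim : Circle → Circle) atTop :=
    ContinuousMap.tendsto_iff_tendstoUniformly.mp hconv
  have hpt : ∀ x : Circle, Tendsto (fun j => h (φ₁ (ψ j)) x) atTop (nhds (hlim x)) :=
    fun x => huc.tendsto_at x
  -- The limit is injective.
  have hinj : Function.Injective (hlim : Circle → Circle) := by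
    intro x z hxz_eq
    by_contra hne
    have hdxz : nndist x z ≠ 0 := fun e => hne (nndist_eq_zero.mp e)
    have hE : η (2 / nndist x z) ≠ 0 := by
      refine eta_ne_zero η ?_
      simp [div_eq_zero_iff, hdxz]
    have hdlim : Tendsto (fun j => nndist (h (φ₁ (ψ j)) x) (h (φ₁ (ψ j)) z)) atTop
        (nhds (nndist (hlim x) (hlim z))) := (hpt x).nndist (hpt z)
    have hge : (η (2 / nndist x z))⁻¹ ≤ nndist (hlim x) (hlim z) :=
      le_of_tendsto_of_tendsto' tendsto_const_nhds hdlim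
        (fun j => qs_lower (hQS (φ₁ (ψ j))) hne)
    rw [hxz_eq, nndist_self] at hge
    exact hE (inv_eq_zero.mp (le_antisymm hge zero_le))
  -- The limit is surjective.
  have hsurj : Function.Surjective (hlim : Circle → Circle) := by
    intro y
    have hex : ∀ j, ∃ x, h (φ₁ (ψ j)) x = y := fun j => (hQS _).1.surjective y
    choose xs hxs using hex
    obtain ⟨x, -, χ, hχ, hxconv⟩ :=
      (isCompact_univ (X := Circle)).tendsto_subseq (fun j => Set.mem_univ (xs j))
    refine ⟨x, ?_⟩
    have huc2 : TendstoUniformly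
        (fun j => ((H (ψ (χ j)) : C(Circle, Circle)) : Circle → Circle))
        (hlim : Circle → Circle) atTop :=
      ContinuousMap.tendsto_iff_tendstoUniformly.mp (hconv.comp hχ.tendsto_atTop)
    have h1 : Tendsto (fun j => h (φ₁ (ψ (χ j))) (xs (χ j))) atTop (nhds (hlim x)) :=
      huc2.tendsto_comp hlim.continuous.continuousAt hxconv
    have h2 : (fun j => h (φ₁ (ψ (χ j))) (xs (χ j))) = fun _ => y :=
      funext fun j => hxs (χ j)
    rw [h2] at h1
    exact tendsto_nhds_unique h1 tendsto_const_nhds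
  -- The limit is an η-QS homeomorphism.
  have hhom : IsHomeomorph (hlim : Circle → Circle) :=
    isHomeomorph_iff_continuous_bijective.mpr ⟨hlim.continuous, hinj, hsurj⟩
  have hQSlim : IsQSHomeo η (hlim : Circle → Circle) := by
    refine ⟨hhom, fun x y z hxy hyz hxz => ?_⟩
    have hd : nndist (hlim x) (hlim z) ≠ 0 :=
      fun e => hxz (hinj (nndist_eq_zero.mp e))
    rw [div_le_iff₀ (pos_iff_ne_zero.mpr hd)]
    refine le_of_tendsto_of_tendsto' ((hpt x).nndist (hpt y))
      (((hpt x).nndist (hpt z)).const_mul _) (fun j => ?_)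
    have hkey := (hQS (φ₁ (ψ j))).2 x y z hxy hyz hxz
    have hdj : nndist (h (φ₁ (ψ j)) x) (h (φ₁ (ψ j)) z) ≠ 0 :=
      fun e => hxz ((hQS _).1.injective (nndist_eq_zero.mp e))
    rw [div_le_iff₀ (pos_iff_ne_zero.mpr hdj)] at hkey
    exact hkey
  -- Assemble.
  refine ⟨φ₁ ∘ ψ, fun z => (hlim z) ^ K, hφ₁.comp hψ, ⟨K, hKd, ⟨hlim, hQSlim, rfl⟩⟩, ?_⟩
  have hup : UniformContinuous (fun w : Circle => w ^ K) :=
    CompactSpace.uniformContinuous_of_continuous (continuous_pow K)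
  have hcomp := hup.comp_tendstoUniformly huc
  have hfeq : (fun j => f ((φ₁ ∘ ψ) j))
      = fun j => (fun w : Circle => w ^ K) ∘ ((H (ψ j) : C(Circle, Circle)) : Circle → Circle) := by
    funext j
    rw [Function.comp_def, hfe (φ₁ (ψ j)), hkφ₁ (ψ j)]
    rfl
  rw [hfeq]
  exact hcomp

end
end
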